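/- Let n ≥ 2 be a natural number and let g : ℝ → ℝ be infinitely differentiable (C^∞) such that all odd-order iterated derivatives of g vanish at 0, i.e. g^{(2j+1)}(0) = 0 for every j ∈ ℕ. Define f : ℝ → ℝ by f(t) = ∫₀¹ (1−s)^{n−2} · g(s·t) ds. Then all odd-order iterated derivatives of f vanish at 0: f^{(2j+1)}(0) = 0 for every j ∈ ℕ. -/

import Mathlib

open intervalIntegral MeasureTheory

/-- Differentiation under the integral sign for `t ↦ ∫₀¹ ψ s * G (s*t) ds`. -/
lemma hasDerivAt_param_int (ψ G G' : ℝ → ℝ) (hψ : Continuous ψ)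
    (hG : Continuous G) (hG' : Continuous G')
    (hder : ∀ x, HasDerivAt G (G' x) x) (t₀ : ℝ) :
    HasDerivAt (fun t => ∫ s in (0:ℝ)..1, ψ s * G (s * t))
      (∫ s in (0:ℝ)..1, ψ s * (G' (s * t₀) * s)) t₀ := by
  set R : ℝ := |t₀| + 1 with hR
  obtain ⟨M, hM⟩ : ∃ M, ∀ y ∈ Set.Icc (-R) R, ‖G' y‖ ≤ M :=
    (isCompact_Icc).exists_bound_of_continuousOn hG'.continuousOn
  have key := intervalIntegral.hasDerivAt_integral_of_dominated_loc_of_deriv_le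
    (F := fun t s => ψ s * G (s * t)) (F' := fun t s => ψ s * (G' (s * t) * s))
    (a := 0) (b := (1:ℝ)) (x₀ := t₀) (bound := fun s => |ψ s| * M)
    (s := Metric.ball t₀ 1) (μ := MeasureTheory.volume) (Metric.ball_mem_nhds t₀ one_pos)
    ?_ ?_ ?_ ?_ ?_ ?_
  · exact key.2
  · filter_upwards with t
    exact ((hψ.mul (hG.comp (by fun_prop : Continuous fun s : ℝ => s * t))).aestronglyMeasurable).restrict
  · exact (hψ.mul (hG.comp (by fun_prop : Continuous fun s : ℝ => s * t₀))).intervalIntegrable _ _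
  · exact ((hψ.mul ((hG'.comp (by fun_prop : Continuous fun s : ℝ => s * t₀)).mul
      continuous_id)).aestronglyMeasurable).restrict
  · filter_upwards with s hs t ht
    have hs01 : s ∈ Set.Ioc (0:ℝ) 1 := by
      simpa [Set.uIoc_of_le (by norm_num : (0:ℝ) ≤ 1)] using hs
    have hst : s * t ∈ Set.Icc (-R) R := by
      have h1 : |s * t| ≤ |t| := by
        rw [abs_mul]
        have : |s| ≤ 1 := abs_le.2 ⟨by linarith [hs01.1], hs01.2⟩
        nlinarith [abs_nonneg t, abs_nonneg (s*t)]
      have h2 : |t| ≤ R := by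
        have := mem_ball_iff_norm.1 ht
        have : |t - t₀| < 1 := this
        have := abs_sub_abs_le_abs_sub t t₀
        rw [hR]; linarith
      constructor <;> [linarith [neg_abs_le (s*t), abs_le.1 (h1.trans h2)];
        linarith [le_abs_self (s*t), abs_le.1 (h1.trans h2)]]
    have hMbd := hM _ hst
    have hsabs : |s| ≤ 1 := abs_le.2 ⟨by linarith [hs01.1], hs01.2⟩
    have : ‖ψ s * (G' (s * t) * s)‖ = |ψ s| * (|G' (s * t)| * |s|) := by
      simp [abs_mul]
    rw [this]
    have hM0 : (0:ℝ) ≤ M := le_trans (norm_nonneg _) hMbd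
    have hMbd' : |G' (s * t)| ≤ M := by simpa [Real.norm_eq_abs] using hMbd
    nlinarith [abs_nonneg (ψ s), abs_nonneg (G' (s*t)), abs_nonneg s,
      mul_le_mul hMbd' hsabs (abs_nonneg s) hM0]
  · exact ((hψ.abs.mul continuous_const)).intervalIntegrable _ _
  · filter_upwards with s _ t ht
    have h1 : HasDerivAt (fun t : ℝ => s * t) s t := by
      simpa using (hasDerivAt_id t).const_mul s
    have h2 := ((hder (s * t)).comp t h1).const_mul (ψ s)
    simpa using h2

/-- k-th derivative of the parametric integral. -/
lemma iteratedDeriv_param_int (ψ : ℝ → ℝ) (hψ : Continuous ψ)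
    (g : ℝ → ℝ) (hg : ContDiff ℝ (⊤ : ℕ∞) g) (k : ℕ) (t : ℝ) :
    iteratedDeriv k (fun t => ∫ s in (0:ℝ)..1, ψ s * g (s * t)) t
      = ∫ s in (0:ℝ)..1, ψ s * s ^ k * iteratedDeriv k g (s * t) := by
  induction k generalizing t with
  | zero => simp
  | succ k ih =>
    rw [iteratedDeriv_succ]
    have heq : iteratedDeriv k (fun t => ∫ s in (0:ℝ)..1, ψ s * g (s * t))
        = fun t => ∫ s in (0:ℝ)..1, (fun s => ψ s * s ^ k) s * iteratedDeriv k g (s * t) :=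
      funext fun t => ih t
    rw [heq]
    have hcψ : Continuous fun s : ℝ => ψ s * s ^ k := hψ.mul (continuous_pow k)
    have hcont : Continuous (iteratedDeriv k g) :=
      hg.continuous_iteratedDeriv k (by exact_mod_cast le_top)
    have hcont' : Continuous (iteratedDeriv (k+1) g) :=
      hg.continuous_iteratedDeriv (k+1) (by exact_mod_cast le_top)
    have hder : ∀ x, HasDerivAt (iteratedDeriv k g) (iteratedDeriv (k+1) g x) x := by
      intro x
      have hdiff : Differentiable ℝ (iteratedDeriv k g) :=
        hg.differentiable_iteratedDeriv k (by exact_mod_cast lt_top_iff_ne_top.2 (by simp))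
      rw [iteratedDeriv_succ]
      exact (hdiff x).hasDerivAt
    have := hasDerivAt_param_int (fun s => ψ s * s ^ k) (iteratedDeriv k g)
      (iteratedDeriv (k+1) g) hcψ hcont hcont' hder t
    rw [this.deriv]
    apply intervalIntegral.integral_congr
    intro s _
    ring

theorem odd_derivs_vanish_param_integral (n : ℕ) (hn : 2 ≤ n) (g : ℝ → ℝ)
    (hg : ContDiff ℝ (⊤ : ℕ∞) g)
    (hodd : ∀ j : ℕ, iteratedDeriv (2 * j + 1) g 0 = 0) (f : ℝ → ℝ)
    (hf : ∀ t : ℝ, f t = ∫ s in (0 : ℝ)..1, (1 - s) ^ (n - 2) * g (s * t)) :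
    ∀ j : ℕ, iteratedDeriv (2 * j + 1) f 0 = 0 := by
  intro j
  have hfe : f = fun t => ∫ s in (0:ℝ)..1, (1 - s) ^ (n - 2) * g (s * t) := funext hf
  rw [hfe, iteratedDeriv_param_int _ (by continuity) g hg]
  simp [hodd j]
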